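/- Let p be a prime, α ∈ ℤ/pℤ, t a natural number, e_1 < e_2 < ... < e_t positive integers, and c_0, c_1, ..., c_t ∈ ℤ/pℤ. Let f = c_0 + Σ_{i=1}^t c_i (x − α)^{e_i} in (ℤ/pℤ)[x], and let g be the remainder of f upon division by x^p − x. Then the polynomial g(x + α) has at most t nonzero non-constant terms; that is, α is a k-sparse shift of g for some k ≤ t. -/

import Mathlib

open Polynomial

private lemma qmonic (p : ℕ) (hp : p.Prime) : ((X:(ZMod p)[X])^p - X).Monic := by
  haveI := Fact.mk hp
  apply monic_X_pow_sub
  rw [degree_X]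
  exact_mod_cast Nat.lt_of_lt_of_le one_lt_two hp.two_le

private lemma qdeg (p : ℕ) (hp : p.Prime) : ((X:(ZMod p)[X])^p - X).degree = (p : WithBot ℕ) := by
  haveI := Fact.mk hp
  rw [sub_eq_add_neg, degree_add_eq_left_of_degree_lt, degree_X_pow]
  rw [degree_X_pow, degree_neg, degree_X]
  exact_mod_cast Nat.lt_of_lt_of_le one_lt_two hp.two_le

private lemma powmod (p : ℕ) (hp : p.Prime) (e : ℕ) :
    ∃ r : ℕ, (X:(ZMod p)[X])^e %ₘ (X^p - X) = X^r := by
  haveI := Fact.mk hp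
  induction e using Nat.strong_induction_on with
  | _ e ih =>
    by_cases h : e < p
    · refine ⟨e, (modByMonic_eq_self_iff (qmonic p hp)).2 ?_⟩
      rw [degree_X_pow, qdeg p hp]
      exact_mod_cast h
    · have h2 := hp.two_le
      obtain ⟨r, hr⟩ := ih (e - p + 1) (by omega)
      refine ⟨r, ?_⟩
      have hsplit : (X:(ZMod p)[X])^e = X^(e-p) * (X^p - X) + X^(e-p+1) := by
        rw [mul_sub, ← pow_add, ← pow_succ]
        have : e - p + p = e := by omega
        rw [this]
        ring
      rw [hsplit, add_modByMonic, hr,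
        (modByMonic_eq_zero_iff_dvd (qmonic p hp)).2 (dvd_mul_left _ _), zero_add]

/-- If `f = c₀ + Σ cᵢ (x - α)^{eᵢ}` and `g = f mod (x^p - x)`, then `g(x + α)`
has at most `t` nonzero non-constant terms, i.e. `α` is a `k`-sparse shift of
`g` for some `k ≤ t`. -/
theorem modByMonic_Xp_sub_X_sparse_shift (p : ℕ) (hp : p.Prime) (α : ZMod p)
    (t : ℕ) (e : Fin t → ℕ) (he : StrictMono e) (hepos : ∀ i, 0 < e i)
    (c₀ : ZMod p) (c : Fin t → ZMod p) :
    ((((C c₀ + ∑ i, C (c i) * (X - C α) ^ e i) %ₘ (X ^ p - X)).comp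
        (X + C α)).support \ {0}).card ≤ t := by
  haveI := Fact.mk hp
  have hq := qmonic p hp
  set q : (ZMod p)[X] := X ^ p - X with hq'
  have hcompq : q.comp (X + C α) = q := by
    rw [hq', sub_comp, pow_comp, X_comp, add_pow_char, ← C_pow, ZMod.pow_card]
    ring
  set f : (ZMod p)[X] := C c₀ + ∑ i, C (c i) * (X - C α) ^ e i with hf
  choose r hr using fun i => powmod p hp (e i)
  have h1 : ∀ g : (ZMod p)[X], (g %ₘ q).comp (X + C α) = (g.comp (X + C α)) %ₘ q := by
    intro g
    conv_rhs => rw [← modByMonic_add_div g q]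
    rw [add_comp, mul_comp, hcompq, add_modByMonic,
      (modByMonic_eq_zero_iff_dvd hq).2 (dvd_mul_right _ _), add_zero]
    symm
    apply (modByMonic_eq_self_iff hq).2
    rw [← taylor_apply]
    by_cases h0 : g %ₘ q = 0
    · simp [h0, qdeg p hp]
      rw [hq', qdeg p hp]
      exact_mod_cast WithBot.bot_lt_coe p
    · calc (taylor α (g %ₘ q)).degree
          = ((taylor α (g %ₘ q)).natDegree : WithBot ℕ) :=
            degree_eq_natDegree (fun hz => h0 (taylor_injective α (by simpa using hz)))
        _ = ((g %ₘ q).natDegree : WithBot ℕ) := by rw [natDegree_taylor]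
        _ = (g %ₘ q).degree := (degree_eq_natDegree h0).symm
        _ < q.degree := degree_modByMonic_lt g hq
  have hmain : (f %ₘ q).comp (X + C α) = C c₀ + ∑ i, C (c i) * X ^ (r i) := by
    have h2 : f.comp (X + C α) = C c₀ + ∑ i, C (c i) * X ^ (e i) := by
      simp [hf, add_comp, sum_comp, mul_comp, pow_comp, sub_comp, X_comp, C_comp]
    have hmh : ∀ (h : (ZMod p)[X]), h %ₘ q = modByMonicHom q h := fun _ => rfl
    rw [h1 f, h2, hmh, map_add, map_sum]
    simp only [← hmh]
    have hC : C c₀ %ₘ q = C c₀ := by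
      apply (modByMonic_eq_self_iff hq).2
      rw [qdeg p hp]
      exact lt_of_le_of_lt degree_C_le (by exact_mod_cast hp.pos)
    rw [hC]
    congr 1
    apply Finset.sum_congr rfl
    intro i _
    rw [← smul_eq_C_mul, smul_modByMonic, hr, smul_eq_C_mul]
  rw [hmain]
  have hsub : ((C c₀ + ∑ i, C (c i) * X ^ (r i)).support \ {0}) ⊆
      Finset.image r Finset.univ := by
    intro n hn
    simp only [Finset.mem_sdiff, mem_support_iff, Finset.mem_singleton] at hn
    obtain ⟨hn1, hn2⟩ := hn
    by_contra hmem
    apply hn1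
    simp only [coeff_add, coeff_C, if_neg hn2, finset_sum_coeff, coeff_C_mul, coeff_X_pow,
      zero_add]
    apply Finset.sum_eq_zero
    intro i _
    rw [if_neg, mul_zero]
    intro hni
    exact hmem (Finset.mem_image.2 ⟨i, Finset.mem_univ i, hni.symm⟩)
  calc (((C c₀ + ∑ i, C (c i) * X ^ (r i)).support \ {0})).card
      ≤ (Finset.image r Finset.univ).card := Finset.card_le_card hsub
    _ ≤ Finset.univ.card := Finset.card_image_le
    _ = t := by simp
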